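/- Let A and B be real symmetric n×n matrices, and let λ₁(A) ≤ ⋯ ≤ λ_n(A) and λ₁(B) ≤ ⋯ ≤ λ_n(B) be their eigenvalues listed in nondecreasing order with multiplicity. Then |i⁺(A) − i⁺(B)| ≤ card{ i ∈ {1,…,n} : |λ_i(B)| ≤ ‖A − B‖_F }, where ‖·‖_F is the Frobenius norm. (In particular, the change in index between A and B is at most the number of eigenvalues of B of absolute value at most ‖A − B‖_F.) -/

import Mathlib

open scoped BigOperators

/-- The Frobenius norm of a real matrix. -/
noncomputable def frobNorm {n : ℕ} (M : Matrix (Fin n) (Fin n) ℝ) : ℝ :=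
  Real.sqrt (∑ i, ∑ j, (M i j) ^ 2)

namespace IndexStability

open Matrix Finset

variable {n : ℕ}

lemma dot_trans (M : Matrix (Fin n) (Fin n) ℝ) (y w : Fin n → ℝ) :
    (M *ᵥ y) ⬝ᵥ w = y ⬝ᵥ (Mᵀ *ᵥ w) := by
  rw [Matrix.dotProduct_mulVec, Matrix.vecMul_transpose]

lemma star_eq_trans (M : Matrix (Fin n) (Fin n) ℝ) : star M = Mᵀ := by
  rw [Matrix.star_eq_conjTranspose, Matrix.conjTranspose_eq_transpose_of_trivial]

lemma dot_self_eq (x : Fin n → ℝ) : x ⬝ᵥ x = ∑ i, x i ^ 2 := by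
  simp [dotProduct, sq]

lemma quad_le (N : Matrix (Fin n) (Fin n) ℝ) (x : Fin n → ℝ) :
    x ⬝ᵥ (N *ᵥ x) ≤ frobNorm N * (x ⬝ᵥ x) := by
  have h1 : x ⬝ᵥ (N *ᵥ x) = ∑ p : Fin n × Fin n, N p.1 p.2 * (x p.1 * x p.2) := by
    rw [Fintype.sum_prod_type]
    simp only [dotProduct, Matrix.mulVec, Finset.mul_sum]
    exact Finset.sum_congr rfl fun i _ => Finset.sum_congr rfl fun j _ => by ring
  have h2 := Real.sum_mul_le_sqrt_mul_sqrt Finset.univ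
    (fun p : Fin n × Fin n => N p.1 p.2) (fun p : Fin n × Fin n => x p.1 * x p.2)
  have e2 : ∑ p : Fin n × Fin n, (N p.1 p.2) ^ 2 = ∑ i, ∑ j, N i j ^ 2 := by
    rw [Fintype.sum_prod_type]
  have e3 : ∑ p : Fin n × Fin n, (x p.1 * x p.2) ^ 2 = (∑ i, x i ^ 2) ^ 2 := by
    rw [Fintype.sum_prod_type, sq (∑ i, x i ^ 2), Finset.sum_mul_sum]
    exact Finset.sum_congr rfl fun i _ => Finset.sum_congr rfl fun j _ => by ring
  have e4 : x ⬝ᵥ x = ∑ i, x i ^ 2 := by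
    simp [dotProduct, sq]
  rw [h1, e4]
  calc ∑ p : Fin n × Fin n, N p.1 p.2 * (x p.1 * x p.2)
      ≤ Real.sqrt (∑ p : Fin n × Fin n, (N p.1 p.2) ^ 2) *
        Real.sqrt (∑ p : Fin n × Fin n, (x p.1 * x p.2) ^ 2) := h2
    _ = frobNorm N * (∑ i, x i ^ 2) := by
        rw [e2, e3, Real.sqrt_sq (by positivity)]; rfl

lemma quad_abs_le (M : Matrix (Fin n) (Fin n) ℝ) (x : Fin n → ℝ) :
    |x ⬝ᵥ (M *ᵥ x)| ≤ frobNorm M * (x ⬝ᵥ x) := by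
  rw [abs_le]
  refine ⟨?_, quad_le M x⟩
  have h := quad_le (-M) x
  have hf : frobNorm (-M) = frobNorm M := by
    unfold frobNorm
    congr 1
    exact Finset.sum_congr rfl fun i _ => Finset.sum_congr rfl fun j _ => by
      simp [neg_sq]
  rw [Matrix.neg_mulVec, dotProduct_neg, hf] at h
  linarith

variable {A : Matrix (Fin n) (Fin n) ℝ}

lemma unit_cancel₁ (hA : A.IsHermitian) (x : Fin n → ℝ) :
    star (hA.eigenvectorUnitary : Matrix (Fin n) (Fin n) ℝ) *ᵥ
      ((hA.eigenvectorUnitary : Matrix (Fin n) (Fin n) ℝ) *ᵥ x) = x := by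
  rw [Matrix.mulVec_mulVec, Unitary.coe_star_mul_self, Matrix.one_mulVec]

lemma unit_cancel₂ (hA : A.IsHermitian) (x : Fin n → ℝ) :
    (hA.eigenvectorUnitary : Matrix (Fin n) (Fin n) ℝ) *ᵥ
      (star (hA.eigenvectorUnitary : Matrix (Fin n) (Fin n) ℝ) *ᵥ x) = x := by
  rw [Matrix.mulVec_mulVec, (Matrix.mem_unitaryGroup_iff).mp hA.eigenvectorUnitary.2,
    Matrix.one_mulVec]

lemma norm_eq (hA : A.IsHermitian) (z : Fin n → ℝ) :
    ((hA.eigenvectorUnitary : Matrix (Fin n) (Fin n) ℝ) *ᵥ z) ⬝ᵥ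
      ((hA.eigenvectorUnitary : Matrix (Fin n) (Fin n) ℝ) *ᵥ z) = z ⬝ᵥ z := by
  rw [dot_trans, ← star_eq_trans, unit_cancel₁ hA]

lemma quad_eq (hA : A.IsHermitian) (z : Fin n → ℝ) :
    ((hA.eigenvectorUnitary : Matrix (Fin n) (Fin n) ℝ) *ᵥ z) ⬝ᵥ
      (A *ᵥ ((hA.eigenvectorUnitary : Matrix (Fin n) (Fin n) ℝ) *ᵥ z)) =
      ∑ i, hA.eigenvalues i * z i ^ 2 := by
  rw [dot_trans, ← star_eq_trans, Matrix.mulVec_mulVec, Matrix.mulVec_mulVec,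
    (by simpa using hA.conjStarAlgAut_star_eigenvectorUnitary :
      star (hA.eigenvectorUnitary : Matrix (Fin n) (Fin n) ℝ) * A *
        (hA.eigenvectorUnitary : Matrix (Fin n) (Fin n) ℝ) =
        diagonal (RCLike.ofReal ∘ hA.eigenvalues))]
  simp only [dotProduct, Matrix.mulVec_diagonal, Function.comp_apply,
    RCLike.ofReal_real_eq_id, id_eq]
  exact Finset.sum_congr rfl fun i _ => by ring

/-- Extension by zero as a linear map. -/
def extZero (p : Fin n → Prop) [DecidablePred p] : ({i // p i} → ℝ) →ₗ[ℝ] (Fin n → ℝ) where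
  toFun c := fun i => if h : p i then c ⟨i, h⟩ else 0
  map_add' c d := by funext i; by_cases h : p i <;> simp [h]
  map_smul' r c := by funext i; by_cases h : p i <;> simp [h]

lemma extZero_pos (p : Fin n → Prop) [DecidablePred p] (z : {i // p i} → ℝ)
    (i : Fin n) (h : p i) : extZero p z i = z ⟨i, h⟩ := dif_pos h

lemma extZero_neg (p : Fin n → Prop) [DecidablePred p] (z : {i // p i} → ℝ)
    (i : Fin n) (h : ¬ p i) : extZero p z i = 0 := dif_neg h

lemma key {B : Matrix (Fin n) (Fin n) ℝ} (hA : A.IsHermitian) (hB : B.IsHermitian)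
    (c d : ℝ)
    (H : ∀ x : Fin n → ℝ, x ≠ 0 → c * (x ⬝ᵥ x) < x ⬝ᵥ (A *ᵥ x) →
      d * (x ⬝ᵥ x) < x ⬝ᵥ (B *ᵥ x)) :
    (Finset.univ.filter fun i => c < hA.eigenvalues i).card ≤
      (Finset.univ.filter fun i => d < hB.eigenvalues i).card := by
  classical
  set U := (hA.eigenvectorUnitary : Matrix (Fin n) (Fin n) ℝ) with hU
  set V := (hB.eigenvectorUnitary : Matrix (Fin n) (Fin n) ℝ) with hV
  set p : Fin n → Prop := fun i => c < hA.eigenvalues i with hp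
  set q : Fin n → Prop := fun i => d < hB.eigenvalues i with hq
  have hker : ∀ z : {i // p i} → ℝ,
      (∀ (i : Fin n), q i → (star V *ᵥ (U *ᵥ extZero p z)) i = 0) → z = 0 := by
    intro z hz
    by_contra hz0
    obtain ⟨i0, hi0⟩ : ∃ i, z i ≠ 0 := by
      by_contra h; push_neg at h; exact hz0 (funext h)
    have hzvne : extZero p z ≠ 0 := by
      intro h
      apply hi0
      have h' := congrFun h i0.1
      rwa [extZero_pos p z i0.1 i0.2, Pi.zero_apply] at h'
    have hxne : U *ᵥ extZero p z ≠ 0 := by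
      intro h
      apply hzvne
      have := unit_cancel₁ hA (extZero p z)
      rw [h, Matrix.mulVec_zero] at this
      exact this.symm
    have hstep : c * ((U *ᵥ extZero p z) ⬝ᵥ (U *ᵥ extZero p z)) <
        (U *ᵥ extZero p z) ⬝ᵥ (A *ᵥ (U *ᵥ extZero p z)) := by
      rw [quad_eq hA, norm_eq hA, dot_self_eq, Finset.mul_sum]
      apply Finset.sum_lt_sum
      · intro i _
        by_cases h : p i
        · exact mul_le_mul_of_nonneg_right (le_of_lt h) (sq_nonneg _)
        · rw [extZero_neg p z i h]
          simp
      · refine ⟨i0.1, Finset.mem_univ _, ?_⟩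
        rw [extZero_pos p z i0.1 i0.2]
        have hzsq : 0 < z ⟨i0.1, i0.2⟩ ^ 2 := by
          have : z ⟨i0.1, i0.2⟩ ≠ 0 := by
            rwa [Subtype.coe_eta]
          positivity
        exact mul_lt_mul_of_pos_right i0.2 hzsq
    have hBlt := H _ hxne hstep
    have hxw : U *ᵥ extZero p z = V *ᵥ (star V *ᵥ (U *ᵥ extZero p z)) :=
      (unit_cancel₂ hB _).symm
    have hle : (U *ᵥ extZero p z) ⬝ᵥ (B *ᵥ (U *ᵥ extZero p z)) ≤
        d * ((U *ᵥ extZero p z) ⬝ᵥ (U *ᵥ extZero p z)) := by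
      conv_lhs => rw [hxw]
      conv_rhs => rw [hxw]
      rw [quad_eq hB, norm_eq hB, dot_self_eq, Finset.mul_sum]
      apply Finset.sum_le_sum
      intro i _
      by_cases h : q i
      · rw [hz i h]; simp
      · exact mul_le_mul_of_nonneg_right (le_of_not_gt h) (sq_nonneg _)
    linarith
  have hinj : Function.Injective
      ((LinearMap.funLeft ℝ ℝ (Subtype.val : {i // q i} → Fin n)).comp
        ((Matrix.mulVecLin (star V)).comp
          ((Matrix.mulVecLin U).comp (extZero p)))) := by
    rw [← LinearMap.ker_eq_bot, LinearMap.ker_eq_bot']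
    intro z hz
    exact hker z fun i h => congrFun hz ⟨i, h⟩
  have hrank := LinearMap.finrank_le_finrank_of_injective hinj
  rw [Module.finrank_fintype_fun_eq_card, Module.finrank_fintype_fun_eq_card] at hrank
  rw [Fintype.card_subtype, Fintype.card_subtype] at hrank
  exact hrank

lemma card_filter_perm (σ : Equiv.Perm (Fin n)) (f : Fin n → ℝ) (P : ℝ → Prop)
    [DecidablePred P] :
    (Finset.univ.filter fun i => P (f (σ i))).card =
      (Finset.univ.filter fun i => P (f i)).card := by
  refine Finset.card_bij (fun i _ => σ i) ?_ ?_ ?_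
  · intro a ha
    simp only [Finset.mem_filter, Finset.mem_univ, true_and] at ha ⊢
    exact ha
  · intro a _ b _ h
    exact σ.injective h
  · intro b hb
    simp only [Finset.mem_filter, Finset.mem_univ, true_and] at hb
    exact ⟨σ.symm b, by simp [hb], by simp⟩

end IndexStability

open IndexStability Matrix in
/-- **Stability of the index.**  Let `A`, `B` be real symmetric `n×n` matrices with
eigenvalues `a 0 ≤ a 1 ≤ ⋯` and `b 0 ≤ b 1 ≤ ⋯` listed in nondecreasing order with
multiplicity.  Then `|i⁺(A) - i⁺(B)|` is at most the number of eigenvalues of `B` whose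
absolute value is at most `‖A - B‖_F`. -/
theorem index_change_le_small_eigenvalues (n : ℕ)
    (A B : Matrix (Fin n) (Fin n) ℝ) (hA : A.IsHermitian) (hB : B.IsHermitian)
    (a b : Fin n → ℝ) (ha : Monotone a) (hb : Monotone b)
    (hpa : ∃ σ : Equiv.Perm (Fin n), a = hA.eigenvalues ∘ σ)
    (hpb : ∃ σ : Equiv.Perm (Fin n), b = hB.eigenvalues ∘ σ) :
    |((Finset.univ.filter fun i => 0 < a i).card : ℤ) -
        ((Finset.univ.filter fun i => 0 < b i).card : ℤ)| ≤
      ((Finset.univ.filter fun i => |b i| ≤ frobNorm (A - B)).card : ℤ) := by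
  classical
  obtain ⟨σa, hσa⟩ := hpa
  obtain ⟨σb, hσb⟩ := hpb
  set r := frobNorm (A - B) with hr
  have hr0 : 0 ≤ r := Real.sqrt_nonneg _
  -- quadratic form perturbation bounds
  have hpert : ∀ x : Fin n → ℝ,
      |x ⬝ᵥ (A *ᵥ x) - x ⬝ᵥ (B *ᵥ x)| ≤ r * (x ⬝ᵥ x) := by
    intro x
    have h := quad_abs_le (A - B) x
    rwa [Matrix.sub_mulVec, dotProduct_sub] at h
  -- counts in terms of unsorted eigenvalues
  have hca : (Finset.univ.filter fun i => 0 < a i).card =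
      (Finset.univ.filter fun i => 0 < hA.eigenvalues i).card := by
    rw [hσa]
    exact card_filter_perm σa hA.eigenvalues (fun v => 0 < v)
  have hcb : (Finset.univ.filter fun i => 0 < b i).card =
      (Finset.univ.filter fun i => 0 < hB.eigenvalues i).card := by
    rw [hσb]
    exact card_filter_perm σb hB.eigenvalues (fun v => 0 < v)
  have hcs : (Finset.univ.filter fun i => |b i| ≤ r).card =
      (Finset.univ.filter fun i => |hB.eigenvalues i| ≤ r).card := by
    rw [hσb]
    exact card_filter_perm σb hB.eigenvalues (fun v => |v| ≤ r)
  -- first key inequality : #{0 < eigA} ≤ #{-r < eigB}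
  have key1 : (Finset.univ.filter fun i => 0 < hA.eigenvalues i).card ≤
      (Finset.univ.filter fun i => -r < hB.eigenvalues i).card := by
    refine key hA hB 0 (-r) ?_
    intro x hx h0
    have h := (abs_le.mp (hpert x)).2
    nlinarith [h0]
  -- second key inequality : #{r < eigB} ≤ #{0 < eigA}
  have key2 : (Finset.univ.filter fun i => r < hB.eigenvalues i).card ≤
      (Finset.univ.filter fun i => 0 < hA.eigenvalues i).card := by
    refine key hB hA r 0 ?_
    intro x hx h0
    have h := (abs_le.mp (hpert x)).1
    nlinarith [h0]
  -- combinatorial counts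
  have count1 : (Finset.univ.filter fun i => -r < hB.eigenvalues i).card ≤
      (Finset.univ.filter fun i => 0 < hB.eigenvalues i).card +
        (Finset.univ.filter fun i => |hB.eigenvalues i| ≤ r).card := by
    refine le_trans (Finset.card_le_card ?_) (Finset.card_union_le _ _)
    intro i hi
    simp only [Finset.mem_filter, Finset.mem_univ, true_and, Finset.mem_union] at hi ⊢
    rcases lt_or_ge 0 (hB.eigenvalues i) with h | h
    · exact Or.inl h
    · exact Or.inr (abs_le.mpr ⟨le_of_lt hi, le_trans h hr0⟩)
  have count2 : (Finset.univ.filter fun i => 0 < hB.eigenvalues i).card ≤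
      (Finset.univ.filter fun i => r < hB.eigenvalues i).card +
        (Finset.univ.filter fun i => |hB.eigenvalues i| ≤ r).card := by
    refine le_trans (Finset.card_le_card ?_) (Finset.card_union_le _ _)
    intro i hi
    simp only [Finset.mem_filter, Finset.mem_univ, true_and, Finset.mem_union] at hi ⊢
    rcases lt_or_ge r (hB.eigenvalues i) with h | h
    · exact Or.inl h
    · exact Or.inr (abs_le.mpr ⟨le_trans (neg_nonpos.mpr hr0) (le_of_lt hi), h⟩)
  have h1 : (Finset.univ.filter fun i => 0 < a i).card ≤
      (Finset.univ.filter fun i => 0 < b i).card +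
        (Finset.univ.filter fun i => |b i| ≤ r).card := by
    rw [hca, hcb, hcs]
    exact le_trans key1 count1
  have h2 : (Finset.univ.filter fun i => 0 < b i).card ≤
      (Finset.univ.filter fun i => 0 < a i).card +
        (Finset.univ.filter fun i => |b i| ≤ r).card := by
    rw [hca, hcb, hcs]
    exact le_trans count2 (by omega)
  rw [abs_sub_le_iff]
  constructor
  · have := h1
    push_cast
    omega
  · have := h2
    push_cast
    omega
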